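/- If S and T are semikernels of a digraph G and E⁻¹(S) ⊆ G \ T, then S ∪ T is a semikernel of G. -/
import Mathlib

/-- Out-neighbours of a set `X` under edge relation `E`. -/
def outS {V : Type*} (E : V → V → Prop) (X : Set V) : Set V := {y | ∃ x ∈ X, E x y}

/-- In-neighbours of a set `X` under edge relation `E`. -/
def inS {V : Type*} (E : V → V → Prop) (X : Set V) : Set V := {y | ∃ x ∈ X, E y x}

/-- `K` is a kernel of the digraph `(G,E)`. -/
def IsKernel {V : Type*} (G : Set V) (E : V → V → Prop) (K : Set V) : Prop :=
  K ⊆ G ∧ inS E K = G \ K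

/-- `S` is a semikernel of the digraph `(G,E)`. -/
def IsSemikernel {V : Type*} (G : Set V) (E : V → V → Prop) (S : Set V) : Prop :=
  S ⊆ G ∧ outS E S ⊆ inS E S ∧ inS E S ⊆ G \ S

theorem stmt6 {V : Type*} (G : Set V) (E : V → V → Prop) (S T : Set V)
    (hS : IsSemikernel G E S) (hT : IsSemikernel G E T)
    (h : inS E S ⊆ G \ T) :
    IsSemikernel G E (S ∪ T) := by
  obtain ⟨hSG, hSout, hSin⟩ := hS
  obtain ⟨hTG, hTout, hTin⟩ := hT
  refine ⟨Set.union_subset hSG hTG, ?_, ?_⟩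
  · rintro y ⟨x, hx | hx, hxy⟩
    · obtain ⟨z, hz, hzy⟩ := hSout ⟨x, hx, hxy⟩
      exact ⟨z, Or.inl hz, hzy⟩
    · obtain ⟨z, hz, hzy⟩ := hTout ⟨x, hx, hxy⟩
      exact ⟨z, Or.inr hz, hzy⟩
  · rintro y ⟨x, hx | hx, hxy⟩
    · have h1 := hSin ⟨x, hx, hxy⟩
      have h2 := h ⟨x, hx, hxy⟩
      exact ⟨h1.1, by rintro (hy | hy); exacts [h1.2 hy, h2.2 hy]⟩
    · have h1 := hTin ⟨x, hx, hxy⟩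
      refine ⟨h1.1, ?_⟩
      rintro (hy | hy)
      · exact (h (hSout ⟨y, hy, hxy⟩)).2 hx
      · exact h1.2 hy
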